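/- arXiv:2206.09787 — 2 statements merged into one kernel-verified Lean document; each statement's English description precedes it below -/
import Mathlib

section
/- The shifted geometric mean with shift a ≥ 0 of positive reals x₁,…,xₙ is at least their (unshifted) geometric mean. -/
open Finset

theorem shiftedGeomMean_ge_geomMean (n : ℕ) (hn : 0 < n)
    (x : Fin n → ℝ) (hx : ∀ i, 0 < x i) (a : ℝ) (ha : 0 ≤ a) :
    (∏ i, x i) ^ ((1 : ℝ) / n) ≤ (∏ i, (x i + a)) ^ ((1 : ℝ) / n) - a := by
  have hn' : (n : ℝ) ≠ 0 := Nat.cast_ne_zero.mpr hn.ne'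
  have hp : ∀ i, 0 < x i + a := fun i => add_pos_of_pos_of_nonneg (hx i) ha
  have hQpos : 0 < ∏ i, (x i + a) := Finset.prod_pos fun i _ => hp i
  have hQm : 0 < (∏ i, (x i + a)) ^ ((1:ℝ)/n) := Real.rpow_pos_of_pos hQpos _
  rw [le_sub_iff_add_le]
  have hsum : ∑ _i : Fin n, (1:ℝ)/n = 1 := by
    simp [Finset.card_univ]
    field_simp
  have h1 := Real.geom_mean_le_arith_mean_weighted Finset.univ (fun _ => (1:ℝ)/n)
    (fun i => x i / (x i + a)) (fun i _ => by positivity) hsum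
    (fun i _ => (div_nonneg (hx i).le (hp i).le))
  have h2 := Real.geom_mean_le_arith_mean_weighted Finset.univ (fun _ => (1:ℝ)/n)
    (fun i => a / (x i + a)) (fun i _ => by positivity) hsum
    (fun i _ => (div_nonneg ha (hp i).le))
  have key : (∏ i, x i) ^ ((1:ℝ)/n) / (∏ i, (x i + a)) ^ ((1:ℝ)/n)
      + a / (∏ i, (x i + a)) ^ ((1:ℝ)/n) ≤ 1 := by
    have e1 : ∏ i : Fin n, (x i / (x i + a)) ^ ((1:ℝ)/n)
        = (∏ i, x i) ^ ((1:ℝ)/n) / (∏ i, (x i + a)) ^ ((1:ℝ)/n) := by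
      rw [Real.finset_prod_rpow _ _ (fun i _ => div_nonneg (hx i).le (hp i).le),
        Finset.prod_div_distrib, Real.div_rpow (Finset.prod_nonneg fun i _ => (hx i).le)
          hQpos.le]
    have e2 : ∏ i : Fin n, (a / (x i + a)) ^ ((1:ℝ)/n)
        = a / (∏ i, (x i + a)) ^ ((1:ℝ)/n) := by
      rw [Real.finset_prod_rpow _ _ (fun i _ => div_nonneg ha (hp i).le),
        Finset.prod_div_distrib, Real.div_rpow (by positivity) hQpos.le,
        Finset.prod_const, Finset.card_univ, Fintype.card_fin,
        ← Real.rpow_natCast a n, ← Real.rpow_mul ha]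
      field_simp
      simp
    calc (∏ i, x i) ^ ((1:ℝ)/n) / (∏ i, (x i + a)) ^ ((1:ℝ)/n)
          + a / (∏ i, (x i + a)) ^ ((1:ℝ)/n)
        ≤ (∑ i : Fin n, (1:ℝ)/n * (x i / (x i + a)))
          + ∑ i : Fin n, (1:ℝ)/n * (a / (x i + a)) := by
          rw [← e1, ← e2]; exact add_le_add h1 h2
      _ = ∑ i : Fin n, (1:ℝ)/n * ((x i + a) / (x i + a)) := by
          rw [← Finset.sum_add_distrib]
          congr 1; ext i; rw [← mul_add, ← add_div]
      _ = 1 := by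
          have : ∀ i : Fin n, (x i + a) / (x i + a) = 1 := fun i =>
            div_self (hp i).ne'
          simp only [this, mul_one]; exact hsum
  calc (∏ i, x i) ^ ((1:ℝ)/n) + a
      = ((∏ i, x i) ^ ((1:ℝ)/n) / (∏ i, (x i + a)) ^ ((1:ℝ)/n)
        + a / (∏ i, (x i + a)) ^ ((1:ℝ)/n)) * (∏ i, (x i + a)) ^ ((1:ℝ)/n) := by
        field_simp
    _ ≤ 1 * (∏ i, (x i + a)) ^ ((1:ℝ)/n) := by
        exact mul_le_mul_of_nonneg_right key hQm.le
    _ = _ := one_mul _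
end

section
/- The shifted geometric mean with shift a of positive reals x₁,…,xₙ is at most their arithmetic mean, and as a → ∞ the shifted geometric mean tends to the arithmetic mean. -/
open Finset Filter

theorem shiftedGeomMean_le_arithMean_and_tendsto (n : ℕ) (hn : 0 < n)
    (x : Fin n → ℝ) (hx : ∀ i, 0 < x i) :
    (∀ a : ℝ, 0 ≤ a →
      (∏ i, (x i + a)) ^ ((1 : ℝ) / n) - a ≤ (1 / n) * ∑ i, x i) ∧
    Tendsto (fun a : ℝ => (∏ i, (x i + a)) ^ ((1 : ℝ) / n) - a) atTop
      (nhds ((1 / n) * ∑ i, x i)) := by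
  have hn' : (n : ℝ) ≠ 0 := Nat.cast_ne_zero.mpr hn.ne'
  constructor
  · intro a ha
    have h := Real.geom_mean_le_arith_mean_weighted Finset.univ (fun _ => (1 : ℝ) / n)
      (fun i => x i + a) (fun i _ => by positivity)
      (by simp [Finset.sum_const, hn'])
      (fun i _ => by have := hx i; linarith)
    rw [Real.finset_prod_rpow _ _ (fun i _ => by have := hx i; linarith)] at h
    have h2 : ∑ i : Fin n, (1 : ℝ) / n * (x i + a) = (1 / n) * ∑ i, x i + a := by
      rw [← Finset.mul_sum, Finset.sum_add_distrib, Finset.sum_const]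
      simp only [Finset.card_univ, Fintype.card_fin, nsmul_eq_mul]
      field_simp
    rw [h2] at h
    linarith
  · -- limit part
    set S : ℝ := ∑ i, x i with hS
    set h : ℝ → ℝ := fun u => (∏ i, (1 + x i * u)) ^ ((1 : ℝ) / n) with hdef
    have hprod : HasDerivAt (fun u : ℝ => ∏ i, (1 + x i * u)) S 0 := by
      have := HasDerivAt.fun_finsetProd (u := Finset.univ)
        (f := fun i (u : ℝ) => 1 + x i * u) (f' := fun i => x i) (x := 0)
        (fun i _ => by simpa using ((hasDerivAt_id (0:ℝ)).const_mul (x i)).const_add 1)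
      simpa using this
    have hrpow : HasDerivAt (fun y : ℝ => y ^ ((1 : ℝ) / n)) ((1 : ℝ) / n)
        ((fun u : ℝ => ∏ i, (1 + x i * u)) 0) := by
      have := Real.hasDerivAt_rpow_const (x := (1:ℝ)) (p := (1:ℝ)/n) (Or.inl one_ne_zero)
      simpa using this
    have hD : HasDerivAt h ((1 / n) * S) 0 := by
      have := HasDerivAt.comp 0 hrpow hprod
      simpa [hdef, Function.comp_def] using this
    have hslope : Tendsto (slope h 0) (nhdsWithin 0 {(0:ℝ)}ᶜ) (nhds ((1 / n) * S)) :=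
      hasDerivAt_iff_tendsto_slope.mp hD
    have hinv : Tendsto (fun a : ℝ => a⁻¹) atTop (nhdsWithin 0 {(0:ℝ)}ᶜ) :=
      tendsto_inv_atTop_nhdsGT_zero.mono_right
        (nhdsWithin_mono _ fun y hy => (Set.mem_Ioi.mp hy).ne')
    have hcomp : Tendsto (fun a : ℝ => slope h 0 a⁻¹) atTop (nhds ((1 / n) * S)) :=
      hslope.comp hinv
    refine hcomp.congr' ?_
    filter_upwards [eventually_gt_atTop (0:ℝ)] with a ha
    have ha' : a ≠ 0 := ha.ne'
    have key : a * (∏ i, (1 + x i * a⁻¹)) ^ ((1 : ℝ) / n)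
        = (∏ i, (x i + a)) ^ ((1 : ℝ) / n) := by
      have hP : (0:ℝ) ≤ ∏ i, (1 + x i * a⁻¹) := by
        apply Finset.prod_nonneg
        intro i _
        have := hx i
        positivity
      have ha0 : a = (a ^ n) ^ ((1 : ℝ) / n) := by
        rw [← Real.rpow_natCast a n, ← Real.rpow_mul ha.le]
        rw [mul_one_div, div_self hn', Real.rpow_one]
      calc a * (∏ i, (1 + x i * a⁻¹)) ^ ((1 : ℝ) / n)
          = (a ^ n) ^ ((1:ℝ)/n) * (∏ i, (1 + x i * a⁻¹)) ^ ((1 : ℝ) / n) := by rw [← ha0]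
        _ = (a ^ n * ∏ i, (1 + x i * a⁻¹)) ^ ((1 : ℝ) / n) := by
            rw [← Real.mul_rpow (by positivity) hP]
        _ = (∏ i, (x i + a)) ^ ((1 : ℝ) / n) := by
            congr 1
            rw [show (a:ℝ) ^ n = ∏ _i : Fin n, a by simp, ← Finset.prod_mul_distrib]
            apply Finset.prod_congr rfl
            intro i _
            field_simp
            ring
    have hs : slope h 0 a⁻¹ = a * (∏ i, (1 + x i * a⁻¹)) ^ ((1:ℝ)/n) - a := by
      rw [slope_def_field, hdef]
      simp only [mul_zero, add_zero, Finset.prod_const_one, Real.one_rpow, sub_zero]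
      field_simp
    rw [hs, key]
end
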